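/- Over single-agent S5 epistemic states where the accessibility relation is total and worlds have pairwise distinct valuations, applying any epistemic action (with preconditions of modal depth at most 1 and no postconditions) yields a state bisimilar to the submodel induced by some subset of the original worlds containing the designated world. Consequently, any plan over a finite set of such actions is equivalent (for goal satisfaction) to one of length at most the number of worlds of the initial state. -/
import Mathlib


/-- Modal formulas over a set of agents, atoms indexed by ℕ. -/
inductive Form (Agent : Type) : Type
  | falsum : Form Agent
  | atom : ℕ → Form Agent
  | neg : Form Agent → Form Agent
  | conj : Form Agent → Form Agent → Form Agent
  | know : Agent → Form Agent → Form Agent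

/-- A Kripke model: accessibility relations and valuation. -/
structure KripkeModel (Agent : Type) (W : Type) where
  R : Agent → W → W → Prop
  V : W → ℕ → Prop

/-- Satisfaction of a modal formula at a world. -/
def KripkeModel.sat {Agent W : Type} (M : KripkeModel Agent W) : W → Form Agent → Prop
  | _, .falsum => False
  | w, .atom p => M.V w p
  | w, .neg φ => ¬ M.sat w φ
  | w, .conj φ ψ => M.sat w φ ∧ M.sat w ψ
  | w, .know i φ => ∀ v, M.R i w v → M.sat v φ

/-- An event model: pointedless Kripke frame with preconditions on events. -/
structure EventModel (Agent : Type) (E : Type) where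
  Q : Agent → E → E → Prop
  pre : E → Form Agent

/-- The product update of a Kripke model with an event model: worlds are the
pairs surviving the preconditions, accessibility is componentwise, valuation
is inherited. -/
def productModel {Agent W E : Type} (M : KripkeModel Agent W) (A : EventModel Agent E) :
    KripkeModel Agent {p : W × E // M.sat p.1 (A.pre p.2)} where
  R i x y := M.R i x.1.1 y.1.1 ∧ A.Q i x.1.2 y.1.2
  V x n := M.V x.1.1 n

/-- An epistemic state: a pointed Kripke model. -/
structure EpiState (Agent : Type) where
  W : Type
  M : KripkeModel Agent W
  w : W

/-- An epistemic action: a pointed event model. -/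
structure EpiAction (Agent : Type) where
  E : Type
  A : EventModel Agent E
  e : E

/-- An action applies to a state when the designated event's precondition
holds at the designated world. -/
def EpiAction.applies {Agent : Type} (a : EpiAction Agent) (s : EpiState Agent) : Prop :=
  s.M.sat s.w (a.A.pre a.e)

/-- The product update of an epistemic state by an applicable epistemic action. -/
def EpiState.update {Agent : Type} (s : EpiState Agent) (a : EpiAction Agent) (h : a.applies s) :
    EpiState Agent where
  W := {p : s.W × a.E // s.M.sat p.1 (a.A.pre p.2)}
  M := productModel s.M a.A
  w := ⟨(s.w, a.e), h⟩

/-- `Exec s α t` : the sequence of actions `α` applies (left to right) to `s`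
and results in `t`. -/
inductive Exec {Agent : Type} : EpiState Agent → List (EpiAction Agent) → EpiState Agent → Prop
  | nil (s : EpiState Agent) : Exec s [] s
  | snoc {s t : EpiState Agent} {α : List (EpiAction Agent)} (a : EpiAction Agent)
      (hst : Exec s α t) (h : a.applies t) : Exec s (α ++ [a]) (t.update a h)

/-- `Z` is a bisimulation between `M` and `M'`. -/
def Bisim {Agent W W' : Type} (M : KripkeModel Agent W) (M' : KripkeModel Agent W')
    (Z : W → W' → Prop) : Prop :=
  ∀ w w', Z w w' →
    (∀ p, M.V w p ↔ M'.V w' p) ∧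
    (∀ i v, M.R i w v → ∃ v', M'.R i w' v' ∧ Z v v') ∧
    (∀ i v', M'.R i w' v' → ∃ v, M.R i w v ∧ Z v v')

/-- Two pointed models are bisimilar. -/
def Bisimilar {Agent : Type} (s t : EpiState Agent) : Prop :=
  ∃ Z : s.W → t.W → Prop, Bisim s.M t.M Z ∧ Z s.w t.w

/-- A formula is propositional (modal depth 0). -/
def Form.IsProp {Agent : Type} : Form Agent → Prop
  | .falsum => True
  | .atom _ => True
  | .neg φ => φ.IsProp
  | .conj φ ψ => φ.IsProp ∧ ψ.IsProp
  | .know _ _ => False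

/-- Modal depth of a formula. -/
def Form.depth {Agent : Type} : Form Agent → ℕ
  | .falsum => 0
  | .atom _ => 0
  | .neg φ => φ.depth
  | .conj φ ψ => max φ.depth ψ.depth
  | .know _ φ => φ.depth + 1

/-- The submodel of a state induced by a set of worlds containing the point. -/
def EpiState.sub {Agent : Type} (s : EpiState Agent) (S : Set s.W) (h : s.w ∈ S) : EpiState Agent where
  W := S
  M := { R := fun i x y => s.M.R i x.1 y.1, V := fun x n => s.M.V x.1 n }
  w := ⟨s.w, h⟩

theorem sat_bisim {Agent W W' : Type} {M : KripkeModel Agent W} {M' : KripkeModel Agent W'}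
    {Z : W → W' → Prop} (hZ : Bisim M M' Z) :
    ∀ (φ : Form Agent) {w w'}, Z w w' → (M.sat w φ ↔ M'.sat w' φ) := by
  intro φ
  induction φ with
  | falsum => intro w w' _; exact Iff.rfl
  | atom p => intro w w' h; exact (hZ w w' h).1 p
  | neg φ ih => intro w w' h; exact not_congr (ih h)
  | conj φ ψ ih1 ih2 => intro w w' h; exact and_congr (ih1 h) (ih2 h)
  | know i φ ih =>
    intro w w' h
    obtain ⟨-, hf, hb⟩ := hZ w w' h
    constructor
    · intro hs v' hr
      obtain ⟨v, hrv, hzv⟩ := hb i v' hr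
      exact (ih hzv).1 (hs v hrv)
    · intro hs v hr
      obtain ⟨v', hrv, hzv⟩ := hf i v hr
      exact (ih hzv).2 (hs v' hrv)

theorem bisimilar_refl {Agent : Type} (s : EpiState Agent) : Bisimilar s s := by
  refine ⟨Eq, ?_, rfl⟩
  rintro w w' rfl
  exact ⟨fun p => Iff.rfl, fun i v hr => ⟨v, hr, rfl⟩, fun i v hr => ⟨v, hr, rfl⟩⟩

theorem bisimilar_symm {Agent : Type} {s t : EpiState Agent} (h : Bisimilar s t) :
    Bisimilar t s := by
  obtain ⟨Z, hZ, hpt⟩ := h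
  refine ⟨fun x y => Z y x, ?_, hpt⟩
  intro w w' h
  obtain ⟨hv, hf, hb⟩ := hZ w' w h
  exact ⟨fun p => (hv p).symm, hb, hf⟩

theorem bisimilar_trans {Agent : Type} {s t u : EpiState Agent}
    (h1 : Bisimilar s t) (h2 : Bisimilar t u) : Bisimilar s u := by
  obtain ⟨Z, hZ, hpt⟩ := h1
  obtain ⟨Z', hZ', hpt'⟩ := h2
  refine ⟨fun x z => ∃ y, Z x y ∧ Z' y z, ?_, ⟨t.w, hpt, hpt'⟩⟩
  rintro w w' ⟨y, hzy, hzy'⟩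
  obtain ⟨hv, hf, hb⟩ := hZ w y hzy
  obtain ⟨hv', hf', hb'⟩ := hZ' y w' hzy'
  refine ⟨fun p => (hv p).trans (hv' p), ?_, ?_⟩
  · intro i v hr
    obtain ⟨v1, hr1, hz1⟩ := hf i v hr
    obtain ⟨v2, hr2, hz2⟩ := hf' i v1 hr1
    exact ⟨v2, hr2, v1, hz1, hz2⟩
  · intro i v' hr
    obtain ⟨v1, hr1, hz1⟩ := hb' i v' hr
    obtain ⟨v2, hr2, hz2⟩ := hb i v1 hr1
    exact ⟨v2, hr2, v1, hz2, hz1⟩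

theorem sat_of_bisimilar {Agent : Type} {s t : EpiState Agent} (h : Bisimilar s t)
    (φ : Form Agent) : s.M.sat s.w φ ↔ t.M.sat t.w φ := by
  obtain ⟨Z, hZ, hpt⟩ := h
  exact sat_bisim hZ φ hpt

theorem applies_of_bisimilar {Agent : Type} {a : EpiAction Agent} {s t : EpiState Agent}
    (h : Bisimilar s t) (ha : a.applies s) : a.applies t :=
  (sat_of_bisimilar h _).1 ha

theorem update_bisimilar {Agent : Type} {s t : EpiState Agent} (hb : Bisimilar s t)
    (a : EpiAction Agent) (hs : a.applies s) (ht : a.applies t) :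
    Bisimilar (s.update a hs) (t.update a ht) := by
  obtain ⟨Z, hZ, hpt⟩ := hb
  refine ⟨fun x y => Z x.1.1 y.1.1 ∧ x.1.2 = y.1.2, ?_, hpt, rfl⟩
  rintro ⟨⟨u, f⟩, hu⟩ ⟨⟨v, g⟩, hv⟩ ⟨hz, he⟩
  dsimp only at hz he
  subst he
  refine ⟨fun p => (hZ u v hz).1 p, ?_, ?_⟩
  · rintro i ⟨⟨u', f'⟩, hu'⟩ ⟨hr, hq⟩
    obtain ⟨v', hrv, hzv⟩ := (hZ u v hz).2.1 i u' hr
    exact ⟨⟨(v', f'), (sat_bisim hZ _ hzv).1 hu'⟩, ⟨hrv, hq⟩, hzv, rfl⟩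
  · rintro i ⟨⟨v', g'⟩, hv'⟩ ⟨hr, hq⟩
    obtain ⟨u', hru, hzu⟩ := (hZ u v hz).2.2 i v' hr
    exact ⟨⟨(u', g'), (sat_bisim hZ _ hzu).2 hv'⟩, ⟨hru, hq⟩, hzu, rfl⟩

theorem update_bisim_sub (s : EpiState Unit) (htot : ∀ u v : s.W, s.M.R () u v)
    (a : EpiAction Unit) (ha : a.applies s) (hQ : Equivalence (a.A.Q ())) :
    Bisimilar (s.update a ha)
      (s.sub {v | ∃ g, a.A.Q () a.e g ∧ s.M.sat v (a.A.pre g)} ⟨a.e, hQ.refl _, ha⟩) := by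
  refine ⟨fun x y => x.1.1 = y.1 ∧ a.A.Q () a.e x.1.2, ?_, rfl, hQ.refl _⟩
  rintro ⟨⟨u, f⟩, hu⟩ ⟨v, hv⟩ ⟨heq, hqe⟩
  dsimp only at heq
  subst heq
  refine ⟨fun p => Iff.rfl, ?_, ?_⟩
  · rintro i ⟨⟨u', f'⟩, hu'⟩ ⟨hr, hq⟩
    cases i
    exact ⟨⟨u', f', hQ.trans hqe hq, hu'⟩, htot _ _, rfl, hQ.trans hqe hq⟩
  · rintro i ⟨v', g, hg, hsat⟩ -
    cases i
    exact ⟨⟨(v', g), hsat⟩, ⟨htot _ _, hQ.trans (hQ.symm hqe) hg⟩, rfl, hg⟩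

theorem sub_sub_bisim (s : EpiState Unit) (S : Set s.W) (hw : s.w ∈ S)
    (T : Set (s.sub S hw).W) (ht : (s.sub S hw).w ∈ T) :
    Bisimilar ((s.sub S hw).sub T ht)
      (s.sub (Subtype.val '' T) ⟨(s.sub S hw).w, ht, rfl⟩) := by
  refine ⟨fun x y => x.1.1 = y.1, ?_, rfl⟩
  rintro ⟨⟨u, hu⟩, hT⟩ ⟨v, hv⟩ heq
  dsimp only at heq
  subst heq
  refine ⟨fun p => Iff.rfl, ?_, ?_⟩
  · rintro i ⟨⟨u', hu'⟩, hT'⟩ hr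
    exact ⟨⟨u', ⟨u', hu'⟩, hT', rfl⟩, hr, rfl⟩
  · rintro i ⟨v', hv'⟩ hr
    obtain ⟨⟨w', hw'⟩, hwT, rfl⟩ := hv'
    exact ⟨⟨⟨w', hw'⟩, hwT⟩, hr, rfl⟩

theorem sub_univ_bisim {Agent : Type} (s : EpiState Agent) :
    Bisimilar s (s.sub Set.univ (Set.mem_univ _)) := by
  refine ⟨fun x y => x = y.1, ?_, rfl⟩
  rintro u ⟨v, hv⟩ heq
  dsimp only at heq
  subst heq
  refine ⟨fun p => Iff.rfl, ?_, ?_⟩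
  · intro i v' hr
    exact ⟨⟨v', Set.mem_univ _⟩, hr, rfl⟩
  · rintro i ⟨v', hv2⟩ hr
    exact ⟨v', hr, rfl⟩

theorem sub_congr (s : EpiState Unit) {S S' : Set s.W} (h : S' = S) (hw' : s.w ∈ S')
    (hw : s.w ∈ S) : Bisimilar (s.sub S' hw') (s.sub S hw) := by
  subst h
  exact bisimilar_refl _

theorem key_lemma (s : EpiState Unit) [Fintype s.W] (htot : ∀ u v : s.W, s.M.R () u v) :
    ∀ (α : List (EpiAction Unit)) (t : EpiState Unit), Exec s α t →
    (∀ a ∈ α, Equivalence (a.A.Q ())) →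
    ∃ (α' : List (EpiAction Unit)) (S : Set s.W) (hw : s.w ∈ S) (t' : EpiState Unit),
      (∀ a ∈ α', a ∈ α) ∧ Exec s α' t' ∧ Bisimilar t t' ∧ Bisimilar t' (s.sub S hw) ∧
      α'.length + S.ncard ≤ Fintype.card s.W := by
  intro α t hex
  induction hex with
  | nil =>
    intro _
    refine ⟨[], Set.univ, Set.mem_univ _, s, fun a h => h, Exec.nil s, bisimilar_refl s,
      sub_univ_bisim s, ?_⟩
    simp [Set.ncard_univ, Nat.card_eq_fintype_card]
  | @snoc t α a hst h ih =>
    intro hacts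
    obtain ⟨α', S, hw, t', hmem, hex', hbt, hts, hlen⟩ :=
      ih (fun b hb => hacts b (List.mem_append_left _ hb))
    have hQ : Equivalence (a.A.Q ()) :=
      hacts a (List.mem_append_right _ (List.mem_singleton_self a))
    have ht' : a.applies t' := applies_of_bisimilar hbt h
    have hss : a.applies (s.sub S hw) := applies_of_bisimilar hts ht'
    have htot' : ∀ u v : (s.sub S hw).W, (s.sub S hw).M.R () u v := fun u v => htot u.1 v.1
    -- the new set
    set T : Set (s.sub S hw).W :=
      {v | ∃ g, a.A.Q () a.e g ∧ (s.sub S hw).M.sat v (a.A.pre g)} with hT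
    have hTw : (s.sub S hw).w ∈ T := ⟨a.e, hQ.refl _, hss⟩
    have hC : Bisimilar ((s.sub S hw).update a hss) ((s.sub S hw).sub T hTw) :=
      update_bisim_sub (s.sub S hw) htot' a hss hQ
    set S' : Set s.W := Subtype.val '' T with hS'
    have hw' : s.w ∈ S' := ⟨(s.sub S hw).w, hTw, rfl⟩
    have hD : Bisimilar ((s.sub S hw).sub T hTw) (s.sub S' hw') := sub_sub_bisim s S hw T hTw
    have hsub : S' ⊆ S := by rintro x ⟨⟨y, hy⟩, -, rfl⟩; exact hy
    have hchain : Bisimilar (t.update a h) (s.sub S' hw') := by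
      refine bisimilar_trans (update_bisimilar hbt a h ht') ?_
      refine bisimilar_trans (update_bisimilar hts a ht' hss) ?_
      exact bisimilar_trans hC hD
    by_cases hEq : S' = S
    · refine ⟨α', S, hw, t', fun b hb => List.mem_append_left _ (hmem b hb), hex', ?_, hts, ?_⟩
      · exact bisimilar_trans hchain
          (bisimilar_trans (sub_congr s hEq hw' hw) (bisimilar_symm hts))
      · exact hlen
    · have hlt : S'.ncard < S.ncard :=
        Set.ncard_lt_ncard (HasSubset.Subset.ssubset_of_ne hsub hEq) (Set.toFinite S)
      refine ⟨α' ++ [a], S', hw', t'.update a ht', ?_, Exec.snoc a hex' ht', ?_, ?_, ?_⟩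
      · intro b hb
        rcases List.mem_append.1 hb with hb | hb
        · exact List.mem_append_left _ (hmem b hb)
        · exact List.mem_append_right _ hb
      · exact update_bisimilar hbt a h ht'
      · exact bisimilar_trans (update_bisimilar hts a ht' hss) (bisimilar_trans hC hD)
      · have : α'.length + 1 + S'.ncard ≤ α'.length + S.ncard := by omega
        simpa using le_trans this hlen

/-- Over a single-agent S5 state with total accessibility and
pairwise distinct valuations, updating by any S5 epistemic action with
depth-≤1 preconditions yields a state bisimilar to an induced submodel
containing the point; consequently plans can be bounded in length by the
number of worlds. -/
theorem s5_update_deletes_and_plans_bounded (s : EpiState Unit) [Fintype s.W]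
    (htot : ∀ u v : s.W, s.M.R () u v)
    (hdistinct : ∀ u v : s.W, (∀ p, s.M.V u p ↔ s.M.V v p) → u = v) :
    (∀ (a : EpiAction Unit) (ha : a.applies s),
        (∀ f : a.E, (a.A.pre f).depth ≤ 1) → Equivalence (a.A.Q ()) →
        ∃ (S : Set s.W) (hw : s.w ∈ S),
          Bisimilar (s.update a ha) (s.sub S hw)) ∧
    (∀ acts : List (EpiAction Unit),
        (∀ a ∈ acts, (∀ f : a.E, (a.A.pre f).depth ≤ 1) ∧ Equivalence (a.A.Q ())) →
        ∀ φ : Form Unit,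
        (∃ (α : List (EpiAction Unit)) (t : EpiState Unit),
            (∀ a ∈ α, a ∈ acts) ∧ Exec s α t ∧ t.M.sat t.w φ) →
        (∃ (α : List (EpiAction Unit)) (t : EpiState Unit),
            (∀ a ∈ α, a ∈ acts) ∧ α.length ≤ Fintype.card s.W ∧
            Exec s α t ∧ t.M.sat t.w φ)) := by
  constructor
  · intro a ha _ hQ
    exact ⟨_, _, update_bisim_sub s htot a ha hQ⟩
  · intro acts hacts φ ⟨α, t, hmem, hex, hsat⟩
    obtain ⟨α', S, hw, t', hmem', hex', hbt, -, hlen⟩ :=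
      key_lemma s htot α t hex (fun a ha => (hacts a (hmem a ha)).2)
    exact ⟨α', t', fun a ha => hmem a (hmem' a ha), le_trans (Nat.le_add_right _ _) hlen,
      hex', (sat_of_bisimilar hbt φ).1 hsat⟩
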